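/- Let V be a finite-dimensional vector space with basis (e_i)_{i ∈ I}, let W ≤ V be a subspace of dimension k+1, and suppose that for every subset S ⊆ I with |S| = d (where 1 ≤ d ≤ dim V − (k+1)) the intersection W ∩ span{e_i : i ∈ S} is nonzero. Then for every subset S ⊆ I with |S| = d − 1, the intersection W ∩ span{e_i : i ∈ S} is also nonzero. -/

import Mathlib

/-- Inductive step: if a `(k+1)`-dimensional subspace `W` meets the span of every
`d` basis vectors nontrivially (with `1 ≤ d ≤ dim V − (k+1)`), then it also meets
the span of every `d − 1` basis vectors nontrivially. -/
theorem nontrivial_inter_coord_spans_downward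
    (K V : Type*) [Field K] [AddCommGroup V] [Module K V] [FiniteDimensional K V]
    (I : Type*) [Fintype I] (b : Module.Basis I K V)
    (k d : ℕ) (hd1 : 1 ≤ d) (hd2 : d ≤ Module.finrank K V - (k + 1))
    (W : Submodule K V) (hW : Module.finrank K W = k + 1)
    (h : ∀ S : Finset I, S.card = d →
      W ⊓ Submodule.span K (b '' (S : Set I)) ≠ ⊥) :
    ∀ S : Finset I, S.card = d - 1 →
      W ⊓ Submodule.span K (b '' (S : Set I)) ≠ ⊥ := by
  classical
  intro S hS hbot
  -- For each i ∉ S, choose a nonzero element of W ⊓ span (b '' (insert i S)).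
  have hcard : ∀ i ∉ S, (insert i S).card = d := by
    intro i hi
    rw [Finset.card_insert_of_notMem hi, hS]
    omega
  have hchoice : ∀ i : (Sᶜ : Finset I), ∃ w : V,
      w ∈ W ∧ w ∈ Submodule.span K (b '' ((insert (i : I) S : Finset I) : Set I)) ∧ w ≠ 0 := by
    intro ⟨i, hi⟩
    rw [Finset.mem_compl] at hi
    have := h (insert i S) (hcard i hi)
    rw [Submodule.ne_bot_iff] at this
    obtain ⟨w, hw, hw0⟩ := this
    exact ⟨w, hw.1, hw.2, hw0⟩
  choose w hwW hwspan hw0 using hchoice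
  -- key: repr (w i) j = 0 for j ∉ insert i S
  have hrepr : ∀ i : (Sᶜ : Finset I), ∀ j : I, j ≠ (i : I) → j ∉ S → b.repr (w i) j = 0 := by
    intro i j hji hjS
    have := (Module.Basis.mem_span_image b).1 (hwspan i)
    by_contra hne
    have : j ∈ ((insert (i : I) S : Finset I) : Set I) := this (Finsupp.mem_support_iff.2 hne)
    simp only [Finset.coe_insert, Set.mem_insert_iff, Finset.mem_coe] at this
    tauto
  -- diagonal coefficient nonzero
  have hdiag : ∀ i : (Sᶜ : Finset I), b.repr (w i) (i : I) ≠ 0 := by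
    intro i hzero
    have hmem : w i ∈ Submodule.span K (b '' (S : Set I)) := by
      rw [Module.Basis.mem_span_image]
      intro j hj
      rw [Finset.mem_coe, Finsupp.mem_support_iff] at hj
      by_contra hjS
      rcases eq_or_ne j (i : I) with rfl | hne
      · exact hj hzero
      · exact hj (hrepr i j hne (by simpa using hjS))
    have : w i ∈ W ⊓ Submodule.span K (b '' (S : Set I)) := ⟨hwW i, hmem⟩
    rw [hbot, Submodule.mem_bot] at this
    exact hw0 i this
  -- the w i are linearly independent
  have hli : LinearIndependent K w := by
    rw [Fintype.linearIndependent_iff]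
    intro c hc j
    have := congrArg (fun v => b.repr v (j : I)) hc
    simp only [map_sum, map_smul, Finsupp.coe_smul, Finsupp.coe_finset_sum,
      Finset.sum_apply, Pi.smul_apply, smul_eq_mul, map_zero, Finsupp.coe_zero,
      Pi.zero_apply] at this
    rw [Finset.sum_eq_single j] at this
    · rcases mul_eq_zero.1 this with h' | h'
      · exact h'
      · exact absurd h' (hdiag j)
    · intro i _ hij
      have hji : (j : I) ≠ (i : I) := fun hh => hij (Subtype.ext hh.symm)
      have hjS : (j : I) ∉ S := Finset.mem_compl.1 j.2
      rw [hrepr i j hji hjS, mul_zero]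
    · intro hj; exact absurd (Finset.mem_univ j) hj
  -- cardinality contradiction
  have hle : Fintype.card (Sᶜ : Finset I) ≤ Module.finrank K W := by
    have : LinearIndependent K fun i : (Sᶜ : Finset I) =>
        (⟨w i, hwW i⟩ : W) := by
      exact LinearIndependent.of_comp W.subtype (by exact hli)
    simpa using this.fintype_card_le_finrank
  have hcardc : Fintype.card (Sᶜ : Finset I) = Fintype.card I - (d - 1) := by
    simp [Finset.card_compl, hS]
  have hn : Fintype.card I = Module.finrank K V := (Module.finrank_eq_card_basis b).symm
  rw [hW, hcardc, hn] at hle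
  omega
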